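/- With H and I₁ as in the spherical-coordinate Hamiltonian H = (1/2)(p_r² + p_θ²/r² + p_φ²/(r²sin²θ)) − k/r + k₁/(r²sin²θcos²φ) + k₂/(r²sin²θsin²φ), the quantity I₂ = (1/2)p_φ² + k₁/cos²φ + k₂/sin²φ Poisson-commutes with both I₁ and H. -/

import Mathlib

/-- Canonical Poisson bracket on ℝⁿ × ℝⁿ (positions, momenta). -/
noncomputable def pb {n : ℕ} (f g : (Fin n → ℝ) × (Fin n → ℝ) → ℝ) :
    (Fin n → ℝ) × (Fin n → ℝ) → ℝ :=
  fun z => ∑ i, (fderiv ℝ f z (Pi.single i 1, 0) * fderiv ℝ g z (0, Pi.single i 1)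
    - fderiv ℝ f z (0, Pi.single i 1) * fderiv ℝ g z (Pi.single i 1, 0))

lemma dirDeriv {n : ℕ} (f : (Fin n → ℝ) × (Fin n → ℝ) → ℝ)
    (z v : (Fin n → ℝ) × (Fin n → ℝ)) (hf : DifferentiableAt ℝ f z) :
    fderiv ℝ f z v = deriv (fun t : ℝ => f (z + t • v)) 0 := by
  have hline : HasDerivAt (fun t : ℝ => z + t • v) v 0 := by
    simpa using (((hasDerivAt_id (0:ℝ)).smul_const v).const_add z)
  have hf' : HasFDerivAt f (fderiv ℝ f z) ((fun t : ℝ => z + t • v) 0) := by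
    simpa using hf.hasFDerivAt
  exact (hf'.comp_hasDerivAt 0 hline).deriv.symm

lemma cosD' (a S c : ℝ) (hS : S ≠ 0) (hc : Real.cos c ≠ 0) :
    HasDerivAt (fun t : ℝ => a / (S * Real.cos (c + t) ^ 2))
      (2 * a * Real.sin c / (S * Real.cos c ^ 3)) 0 := by
  have hq : HasDerivAt (fun t : ℝ => c + t) 1 0 := (hasDerivAt_id 0).const_add c
  have hcos : HasDerivAt (fun t : ℝ => Real.cos (c + t)) (-Real.sin c) 0 := by
    simpa [Function.comp_def] using (Real.hasDerivAt_cos (c + 0)).comp 0 hq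
  have hcos2 : HasDerivAt (fun t : ℝ => S * Real.cos (c + t) ^ 2)
      (S * (2 * Real.cos c * (-Real.sin c))) 0 := by
    simpa [mul_comm, mul_assoc, mul_left_comm] using (hcos.pow 2).const_mul S
  have h1 := (hasDerivAt_const (0:ℝ) a).fun_div hcos2
    (mul_ne_zero hS (pow_ne_zero 2 (by simpa using hc)))
  refine h1.congr_deriv ?_
  simp only [add_zero]
  field_simp
  ring

lemma sinD' (a S c : ℝ) (hS : S ≠ 0) (hs : Real.sin c ≠ 0) :
    HasDerivAt (fun t : ℝ => a / (S * Real.sin (c + t) ^ 2))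
      (-(2 * a * Real.cos c / (S * Real.sin c ^ 3))) 0 := by
  have hq : HasDerivAt (fun t : ℝ => c + t) 1 0 := (hasDerivAt_id 0).const_add c
  have hsin : HasDerivAt (fun t : ℝ => Real.sin (c + t)) (Real.cos c) 0 := by
    simpa [Function.comp_def] using (Real.hasDerivAt_sin (c + 0)).comp 0 hq
  have hsin2 : HasDerivAt (fun t : ℝ => S * Real.sin (c + t) ^ 2)
      (S * (2 * Real.sin c * Real.cos c)) 0 := by
    simpa [mul_comm, mul_assoc, mul_left_comm] using (hsin.pow 2).const_mul S
  have h1 := (hasDerivAt_const (0:ℝ) a).fun_div hsin2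
    (mul_ne_zero hS (pow_ne_zero 2 (by simpa using hs)))
  refine h1.congr_deriv ?_
  simp only [add_zero]
  field_simp
  ring

lemma cosD (a c : ℝ) (hc : Real.cos c ≠ 0) :
    HasDerivAt (fun t : ℝ => a / Real.cos (c + t) ^ 2)
      (2 * a * Real.sin c / Real.cos c ^ 3) 0 := by
  simpa using cosD' a 1 c one_ne_zero hc

lemma sinD (a c : ℝ) (hs : Real.sin c ≠ 0) :
    HasDerivAt (fun t : ℝ => a / Real.sin (c + t) ^ 2)
      (-(2 * a * Real.cos c / Real.sin c ^ 3)) 0 := by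
  simpa using sinD' a 1 c one_ne_zero hs

set_option maxHeartbeats 1000000 in
/-- I₂ = (1/2)p_φ² + k₁/cos²φ + k₂/sin²φ Poisson-commutes with both
I₁ = (1/2)(p_θ² + p_φ²/sin²θ) + k₁/(sin²θcos²φ) + k₂/(sin²θsin²φ) and the
spherical-coordinate Hamiltonian H. Coordinates: r = z.1 0, θ = z.1 1, φ = z.1 2. -/
theorem stmt12 (k k₁ k₂ : ℝ) :
    ∀ z : (Fin 3 → ℝ) × (Fin 3 → ℝ), 0 < z.1 0 → Real.sin (z.1 1) ≠ 0 →
      Real.cos (z.1 2) ≠ 0 → Real.sin (z.1 2) ≠ 0 →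
    pb (fun w => (1 / 2) * (w.2 2) ^ 2 + k₁ / Real.cos (w.1 2) ^ 2
          + k₂ / Real.sin (w.1 2) ^ 2)
       (fun w => (1 / 2) * ((w.2 1) ^ 2 + (w.2 2) ^ 2 / Real.sin (w.1 1) ^ 2)
          + k₁ / (Real.sin (w.1 1) ^ 2 * Real.cos (w.1 2) ^ 2)
          + k₂ / (Real.sin (w.1 1) ^ 2 * Real.sin (w.1 2) ^ 2)) z = 0 ∧
    pb (fun w => (1 / 2) * (w.2 2) ^ 2 + k₁ / Real.cos (w.1 2) ^ 2
          + k₂ / Real.sin (w.1 2) ^ 2)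
       (fun w => (1 / 2) * ((w.2 0) ^ 2 + (w.2 1) ^ 2 / (w.1 0) ^ 2
          + (w.2 2) ^ 2 / ((w.1 0) ^ 2 * Real.sin (w.1 1) ^ 2))
          - k / (w.1 0)
          + k₁ / ((w.1 0) ^ 2 * Real.sin (w.1 1) ^ 2 * Real.cos (w.1 2) ^ 2)
          + k₂ / ((w.1 0) ^ 2 * Real.sin (w.1 1) ^ 2 * Real.sin (w.1 2) ^ 2)) z = 0 := by
  intro z hr hs1 hc2 hs2
  have hr0 : z.1 0 ≠ 0 := ne_of_gt hr
  have hS2 : Real.sin (z.1 1) ^ 2 ≠ 0 := pow_ne_zero 2 hs1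
  have hR : (z.1 0) ^ 2 * Real.sin (z.1 1) ^ 2 ≠ 0 :=
    mul_ne_zero (pow_ne_zero 2 hr0) hS2
  set F := (fun w : (Fin 3 → ℝ) × (Fin 3 → ℝ) =>
      (1 / 2) * (w.2 2) ^ 2 + k₁ / Real.cos (w.1 2) ^ 2
        + k₂ / Real.sin (w.1 2) ^ 2) with hF
  set G := (fun w : (Fin 3 → ℝ) × (Fin 3 → ℝ) =>
      (1 / 2) * ((w.2 1) ^ 2 + (w.2 2) ^ 2 / Real.sin (w.1 1) ^ 2)
        + k₁ / (Real.sin (w.1 1) ^ 2 * Real.cos (w.1 2) ^ 2)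
        + k₂ / (Real.sin (w.1 1) ^ 2 * Real.sin (w.1 2) ^ 2)) with hG
  set H := (fun w : (Fin 3 → ℝ) × (Fin 3 → ℝ) =>
      (1 / 2) * ((w.2 0) ^ 2 + (w.2 1) ^ 2 / (w.1 0) ^ 2
        + (w.2 2) ^ 2 / ((w.1 0) ^ 2 * Real.sin (w.1 1) ^ 2))
        - k / (w.1 0)
        + k₁ / ((w.1 0) ^ 2 * Real.sin (w.1 1) ^ 2 * Real.cos (w.1 2) ^ 2)
        + k₂ / ((w.1 0) ^ 2 * Real.sin (w.1 1) ^ 2 * Real.sin (w.1 2) ^ 2)) with hH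
  have hFd : DifferentiableAt ℝ F z := by
    rw [hF]; fun_prop (disch := positivity)
  have hGd : DifferentiableAt ℝ G z := by
    rw [hG]; simp only [div_eq_mul_inv]; fun_prop (disch := positivity)
  have hHd : DifferentiableAt ℝ H z := by
    rw [hH]; simp only [div_eq_mul_inv]; fun_prop (disch := positivity)
  -- zero partials of F
  have hFq0 : fderiv ℝ F z ((Pi.single 0 1 : Fin 3 → ℝ), (0 : Fin 3 → ℝ)) = 0 := by
    rw [dirDeriv _ _ _ hFd]
    have h : (fun t : ℝ => F (z + t • ((Pi.single 0 1 : Fin 3 → ℝ), (0 : Fin 3 → ℝ))))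
        = fun _ => F z := by
      funext t; simp [hF, Pi.single_apply]
    rw [h, deriv_const]
  have hFq1 : fderiv ℝ F z ((Pi.single 1 1 : Fin 3 → ℝ), (0 : Fin 3 → ℝ)) = 0 := by
    rw [dirDeriv _ _ _ hFd]
    have h : (fun t : ℝ => F (z + t • ((Pi.single 1 1 : Fin 3 → ℝ), (0 : Fin 3 → ℝ))))
        = fun _ => F z := by
      funext t; simp [hF, Pi.single_apply]
    rw [h, deriv_const]
  have hFp0 : fderiv ℝ F z ((0 : Fin 3 → ℝ), (Pi.single 0 1 : Fin 3 → ℝ)) = 0 := by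
    rw [dirDeriv _ _ _ hFd]
    have h : (fun t : ℝ => F (z + t • ((0 : Fin 3 → ℝ), (Pi.single 0 1 : Fin 3 → ℝ))))
        = fun _ => F z := by
      funext t; simp [hF, Pi.single_apply]
    rw [h, deriv_const]
  have hFp1 : fderiv ℝ F z ((0 : Fin 3 → ℝ), (Pi.single 1 1 : Fin 3 → ℝ)) = 0 := by
    rw [dirDeriv _ _ _ hFd]
    have h : (fun t : ℝ => F (z + t • ((0 : Fin 3 → ℝ), (Pi.single 1 1 : Fin 3 → ℝ))))
        = fun _ => F z := by
      funext t; simp [hF, Pi.single_apply]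
    rw [h, deriv_const]
  -- nontrivial partials of F
  have hFq2 : fderiv ℝ F z ((Pi.single 2 1 : Fin 3 → ℝ), (0 : Fin 3 → ℝ))
      = 0 + 2 * k₁ * Real.sin (z.1 2) / Real.cos (z.1 2) ^ 3
          + -(2 * k₂ * Real.cos (z.1 2) / Real.sin (z.1 2) ^ 3) := by
    rw [dirDeriv _ _ _ hFd]
    have hbase : HasDerivAt (fun t : ℝ => (1/2) * (z.2 2) ^ 2
        + k₁ / Real.cos (z.1 2 + t) ^ 2 + k₂ / Real.sin (z.1 2 + t) ^ 2)
        (0 + 2 * k₁ * Real.sin (z.1 2) / Real.cos (z.1 2) ^ 3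
          + -(2 * k₂ * Real.cos (z.1 2) / Real.sin (z.1 2) ^ 3)) 0 :=
      ((hasDerivAt_const 0 _).add (cosD k₁ (z.1 2) hc2)).add (sinD k₂ (z.1 2) hs2)
    exact (hbase.congr_of_eventuallyEq (Filter.Eventually.of_forall fun t => by
      simp [hF, Pi.single_apply])).deriv
  have hFp2 : fderiv ℝ F z ((0 : Fin 3 → ℝ), (Pi.single 2 1 : Fin 3 → ℝ)) = z.2 2 := by
    rw [dirDeriv _ _ _ hFd]
    have h1 : HasDerivAt (fun t : ℝ => (1/2) * (z.2 2 + t) ^ 2) (z.2 2) 0 := by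
      have := (((hasDerivAt_id (0:ℝ)).const_add (z.2 2)).fun_pow 2).const_mul (1/2 : ℝ)
      refine this.congr_deriv ?_
      norm_num
      ring
    have hbase := (h1.add_const (k₁ / Real.cos (z.1 2) ^ 2)).add_const
      (k₂ / Real.sin (z.1 2) ^ 2)
    exact (hbase.congr_of_eventuallyEq (Filter.Eventually.of_forall fun t => by
      simp [hF, Pi.single_apply])).deriv
  -- partials of G
  have hGq2 : fderiv ℝ G z ((Pi.single 2 1 : Fin 3 → ℝ), (0 : Fin 3 → ℝ))
      = 0 + 2 * k₁ * Real.sin (z.1 2) / (Real.sin (z.1 1) ^ 2 * Real.cos (z.1 2) ^ 3)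
          + -(2 * k₂ * Real.cos (z.1 2) / (Real.sin (z.1 1) ^ 2 * Real.sin (z.1 2) ^ 3)) := by
    rw [dirDeriv _ _ _ hGd]
    have hbase := ((hasDerivAt_const (0:ℝ)
        ((1/2) * ((z.2 1) ^ 2 + (z.2 2) ^ 2 / Real.sin (z.1 1) ^ 2))).add
      (cosD' k₁ (Real.sin (z.1 1) ^ 2) (z.1 2) hS2 hc2)).add
      (sinD' k₂ (Real.sin (z.1 1) ^ 2) (z.1 2) hS2 hs2)
    exact (hbase.congr_of_eventuallyEq (Filter.Eventually.of_forall fun t => by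
      simp [hG, Pi.single_apply])).deriv
  have hGp2 : fderiv ℝ G z ((0 : Fin 3 → ℝ), (Pi.single 2 1 : Fin 3 → ℝ))
      = z.2 2 / Real.sin (z.1 1) ^ 2 := by
    rw [dirDeriv _ _ _ hGd]
    have h1 : HasDerivAt (fun t : ℝ =>
        (1/2) * ((z.2 1) ^ 2 + (z.2 2 + t) ^ 2 / Real.sin (z.1 1) ^ 2))
        (z.2 2 / Real.sin (z.1 1) ^ 2) 0 := by
      have := (((((hasDerivAt_id (0:ℝ)).const_add (z.2 2)).fun_pow 2).div_const
        (Real.sin (z.1 1) ^ 2)).const_add ((z.2 1) ^ 2)).const_mul (1/2 : ℝ)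
      refine this.congr_deriv ?_
      norm_num
      ring
    have hbase := (h1.add_const
      (k₁ / (Real.sin (z.1 1) ^ 2 * Real.cos (z.1 2) ^ 2))).add_const
      (k₂ / (Real.sin (z.1 1) ^ 2 * Real.sin (z.1 2) ^ 2))
    exact (hbase.congr_of_eventuallyEq (Filter.Eventually.of_forall fun t => by
      simp [hG, Pi.single_apply])).deriv
  -- partials of H
  have hHq2 : fderiv ℝ H z ((Pi.single 2 1 : Fin 3 → ℝ), (0 : Fin 3 → ℝ))
      = 0 + 2 * k₁ * Real.sin (z.1 2) / ((z.1 0) ^ 2 * Real.sin (z.1 1) ^ 2 * Real.cos (z.1 2) ^ 3)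
          + -(2 * k₂ * Real.cos (z.1 2) / ((z.1 0) ^ 2 * Real.sin (z.1 1) ^ 2 * Real.sin (z.1 2) ^ 3)) := by
    rw [dirDeriv _ _ _ hHd]
    have hbase := ((hasDerivAt_const (0:ℝ)
        ((1/2) * ((z.2 0) ^ 2 + (z.2 1) ^ 2 / (z.1 0) ^ 2
          + (z.2 2) ^ 2 / ((z.1 0) ^ 2 * Real.sin (z.1 1) ^ 2)) - k / (z.1 0))).add
      (cosD' k₁ ((z.1 0) ^ 2 * Real.sin (z.1 1) ^ 2) (z.1 2) hR hc2)).add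
      (sinD' k₂ ((z.1 0) ^ 2 * Real.sin (z.1 1) ^ 2) (z.1 2) hR hs2)
    exact (hbase.congr_of_eventuallyEq (Filter.Eventually.of_forall fun t => by
      simp [hH, Pi.single_apply])).deriv
  have hHp2 : fderiv ℝ H z ((0 : Fin 3 → ℝ), (Pi.single 2 1 : Fin 3 → ℝ))
      = z.2 2 / ((z.1 0) ^ 2 * Real.sin (z.1 1) ^ 2) := by
    rw [dirDeriv _ _ _ hHd]
    have h1 : HasDerivAt (fun t : ℝ =>
        (1/2) * ((z.2 0) ^ 2 + (z.2 1) ^ 2 / (z.1 0) ^ 2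
          + (z.2 2 + t) ^ 2 / ((z.1 0) ^ 2 * Real.sin (z.1 1) ^ 2)))
        (z.2 2 / ((z.1 0) ^ 2 * Real.sin (z.1 1) ^ 2)) 0 := by
      have := (((((hasDerivAt_id (0:ℝ)).const_add (z.2 2)).fun_pow 2).div_const
        ((z.1 0) ^ 2 * Real.sin (z.1 1) ^ 2)).const_add
        ((z.2 0) ^ 2 + (z.2 1) ^ 2 / (z.1 0) ^ 2)).const_mul (1/2 : ℝ)
      refine this.congr_deriv ?_
      norm_num
      ring
    have hbase := (((h1.sub_const (k / (z.1 0))).add_const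
      (k₁ / ((z.1 0) ^ 2 * Real.sin (z.1 1) ^ 2 * Real.cos (z.1 2) ^ 2))).add_const
      (k₂ / ((z.1 0) ^ 2 * Real.sin (z.1 1) ^ 2 * Real.sin (z.1 2) ^ 2)))
    exact (hbase.congr_of_eventuallyEq (Filter.Eventually.of_forall fun t => by
      simp [hH, Pi.single_apply])).deriv
  constructor
  · simp only [pb, Fin.sum_univ_three, hFq0, hFq1, hFq2, hFp0, hFp1, hFp2, hGq2, hGp2]
    field_simp
    ring
  · simp only [pb, Fin.sum_univ_three, hFq0, hFq1, hFq2, hFp0, hFp1, hFp2, hHq2, hHp2]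
    field_simp
    ring
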